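/- Let q be an odd integer with 0 < q < m. Then for every t ∈ V_m, ξ⁻_q(t)·(ξ⁻_1(t) − ξ⁻_1(−q)) = (q+1)·ξ⁺_{q+1}(t) in R, where ξ⁻_1(−q) ∈ R is the value of ξ⁻_1 at the vertex −q. -/

import Mathlib

noncomputable section

open Finset MvPolynomial

/-- The coefficient ring `R = ℚ[α,δ]`, realized as polynomials in two variables. -/
abbrev Rpoly : Type := MvPolynomial (Fin 2) ℚ

/-- The variable `α`. -/
def va : Rpoly := X 0

/-- The variable `δ`. -/
def vd : Rpoly := X 1

/-- `P⁻(a,b) = ∏_{k=a}^{b} (−α + k·δ)`. -/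
def Pneg (a b : ℤ) : Rpoly :=
  ∏ k ∈ Finset.Icc a b, (-va + MvPolynomial.C (k : ℚ) * vd)

/-- `P⁺(a,b) = ∏_{k=a}^{b} (α + k·δ)`. -/
def Ppos (a b : ℤ) : Rpoly :=
  ∏ k ∈ Finset.Icc a b, (va + MvPolynomial.C (k : ℚ) * vd)

/-- Binomial coefficient `C(n,q)` (all uses have `n ≥ 0`). -/
def B (n : ℤ) (q : ℕ) : ℚ := (n.toNat).choose q

/-- The Knutson–Tao class `ξ⁺_q = ξ(m+q, m−q)`, as a function on vertices `t`
(the vertex `t` encodes the pair `(m+t, m−t)`). -/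
def xiP (m : ℤ) (q : ℕ) (t : ℤ) : Rpoly :=
  if (q : ℤ) ≤ t ∧ t ≤ m then
    MvPolynomial.C (B (⌈((t : ℚ) - (q : ℚ) + 1) / 2⌉ + q - 1) q) *
      Pneg (⌈((t : ℚ) - (q : ℚ) + 1) / 2⌉ - 1) (⌈((t : ℚ) - (q : ℚ) + 1) / 2⌉ + q - 2)
  else if -m ≤ t ∧ t ≤ -((q : ℤ) + 1) then
    MvPolynomial.C (B (⌈(-(t : ℚ) - (q : ℚ)) / 2⌉ + q - 1) q) *
      Ppos (⌈(-(t : ℚ) - (q : ℚ)) / 2⌉ + 1) (⌈(-(t : ℚ) - (q : ℚ)) / 2⌉ + q)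
  else 0

/-- The Knutson–Tao class `ξ⁻_q = ξ(m−q, m+q)`. -/
def xiM (m : ℤ) (q : ℕ) (t : ℤ) : Rpoly :=
  if (q : ℤ) + 1 ≤ t ∧ t ≤ m then
    MvPolynomial.C (B (⌈((t : ℚ) - (q : ℚ)) / 2⌉ + q - 1) q) *
      Pneg (⌈((t : ℚ) - (q : ℚ)) / 2⌉) (⌈((t : ℚ) - (q : ℚ)) / 2⌉ + q - 1)
  else if -m ≤ t ∧ t ≤ -(q : ℤ) then
    MvPolynomial.C (B (⌈(-(t : ℚ) - (q : ℚ) + 1) / 2⌉ + q - 1) q) *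
      Ppos (⌈(-(t : ℚ) - (q : ℚ) + 1) / 2⌉) (⌈(-(t : ℚ) - (q : ℚ) + 1) / 2⌉ + q - 1)
  else 0

/-- The weight of the vertex `t`: `w(t) = ((1−2t)/2)·α + (t(t−1)/2)·δ`. -/
def w (t : ℤ) : Rpoly :=
  MvPolynomial.C ((1 - 2 * (t : ℚ)) / 2) * va +
    MvPolynomial.C (((t : ℚ) * ((t : ℚ) - 1)) / 2) * vd

/- ===== auxiliary lemmas ===== -/

lemma ceil_half (n : ℤ) : ⌈(n : ℚ) / 2⌉ = (n + 1) / 2 := by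
  rw [Int.ceil_eq_iff]
  constructor
  · rw [lt_div_iff₀ (by norm_num : (0:ℚ) < 2)]
    have h1 : 2 * ((n+1)/2) - 2 < n := by omega
    have : 2 * (((n+1)/2 : ℤ) : ℚ) - 2 < (n:ℚ) := by exact_mod_cast h1
    push_cast at this ⊢
    linarith
  · rw [div_le_iff₀ (by norm_num : (0:ℚ) < 2)]
    have h1 : n ≤ 2 * ((n+1)/2) := by omega
    have : ((n:ℚ)) ≤ 2 * (((n+1)/2 : ℤ) : ℚ) := by exact_mod_cast h1
    push_cast at this ⊢
    linarith

lemma B_one (n : ℤ) (h : 0 ≤ n) : B n 1 = (n:ℚ) := by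
  unfold B; rw [Nat.choose_one_right]; exact_mod_cast congrArg (Int.cast : ℤ → ℚ) (Int.toNat_of_nonneg h)

lemma Pneg_single (a : ℤ) : Pneg a a = -va + MvPolynomial.C ((a:ℚ)) * vd := by
  simp [Pneg]

lemma Ppos_single (a : ℤ) : Ppos a a = va + MvPolynomial.C ((a:ℚ)) * vd := by
  simp [Ppos]

lemma Pneg_cons (a b c : ℤ) (h : a ≤ b + 1) (hc : c = a - 1) :
    (-va + MvPolynomial.C ((c:ℚ)) * vd) * Pneg a b = Pneg c b := by
  subst hc
  unfold Pneg
  rw [show Finset.Icc (a-1) b = insert (a-1) (Finset.Icc a b) by ext x; simp; omega,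
      Finset.prod_insert (by simp)]

lemma Ppos_snoc (a b c : ℤ) (h : a ≤ b + 1) (hc : c = b + 1) :
    Ppos a b * (va + MvPolynomial.C ((c:ℚ)) * vd) = Ppos a c := by
  subst hc
  unfold Ppos
  rw [show Finset.Icc a (b+1) = insert (b+1) (Finset.Icc a b) by ext x; simp; omega,
      Finset.prod_insert (by simp), mul_comm]

lemma xiM_eval_pos (m : ℤ) (q : ℕ) (t a b : ℤ) (h1 : (q:ℤ)+1 ≤ t) (h2 : t ≤ m)
    (ha : a = (t - q + 1)/2) (hb : b = a + q - 1) :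
    xiM m q t = MvPolynomial.C (B b q) * Pneg a b := by
  unfold xiM
  rw [if_pos ⟨h1, h2⟩]
  have hc : ⌈((t:ℚ) - (q:ℚ))/2⌉ = a := by
    rw [show ((t:ℚ) - (q:ℚ))/2 = (((t - (q:ℤ)):ℤ):ℚ)/2 by push_cast; ring, ceil_half]
    omega
  rw [hc, ← hb]

lemma xiM_eval_neg (m : ℤ) (q : ℕ) (t a b : ℤ) (h1 : -m ≤ t) (h2 : t ≤ -(q:ℤ))
    (ha : a = (-t - q + 2)/2) (hb : b = a + q - 1) :
    xiM m q t = MvPolynomial.C (B b q) * Ppos a b := by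
  unfold xiM
  rw [if_neg (by omega), if_pos ⟨h1, h2⟩]
  have hc : ⌈(-(t:ℚ) - (q:ℚ) + 1)/2⌉ = a := by
    rw [show (-(t:ℚ) - (q:ℚ) + 1)/2 = (((-t - (q:ℤ) + 1):ℤ):ℚ)/2 by push_cast; ring, ceil_half]
    omega
  rw [hc, ← hb]

lemma xiP_eval_pos (m : ℤ) (q : ℕ) (t a b c n : ℤ) (h1 : (q:ℤ) ≤ t) (h2 : t ≤ m)
    (ha : a = (t - q + 2)/2) (hc : c = a - 1) (hb : b = a + q - 2) (hn : n = a + q - 1) :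
    xiP m q t = MvPolynomial.C (B n q) * Pneg c b := by
  unfold xiP
  rw [if_pos ⟨h1, h2⟩]
  have hcl : ⌈((t:ℚ) - (q:ℚ) + 1)/2⌉ = a := by
    rw [show ((t:ℚ) - (q:ℚ) + 1)/2 = (((t - (q:ℤ) + 1):ℤ):ℚ)/2 by push_cast; ring, ceil_half]
    omega
  rw [hcl, ← hb, ← hn, ← hc]

lemma xiP_eval_neg (m : ℤ) (q : ℕ) (t a b c n : ℤ) (h1 : -m ≤ t) (h2 : t ≤ -((q:ℤ)+1))
    (ha : a = (-t - q + 1)/2) (hc : c = a + 1) (hb : b = a + q) (hn : n = a + q - 1) :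
    xiP m q t = MvPolynomial.C (B n q) * Ppos c b := by
  unfold xiP
  rw [if_neg (by omega), if_pos ⟨h1, h2⟩]
  have hcl : ⌈(-(t:ℚ) - (q:ℚ))/2⌉ = a := by
    rw [show (-(t:ℚ) - (q:ℚ))/2 = (((-t - (q:ℤ)):ℤ):ℚ)/2 by push_cast; ring, ceil_half]
    omega
  rw [hcl, ← hn, ← hb, ← hc]

lemma xiM_zero (m : ℤ) (q : ℕ) (t : ℤ) (h1 : ¬((q:ℤ)+1 ≤ t ∧ t ≤ m))
    (h2 : ¬(-m ≤ t ∧ t ≤ -(q:ℤ))) : xiM m q t = 0 := by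
  unfold xiM; rw [if_neg h1, if_neg h2]

lemma xiP_zero (m : ℤ) (q : ℕ) (t : ℤ) (h1 : ¬((q:ℤ) ≤ t ∧ t ≤ m))
    (h2 : ¬(-m ≤ t ∧ t ≤ -((q:ℤ)+1))) : xiP m q t = 0 := by
  unfold xiP; rw [if_neg h1, if_neg h2]

lemma xiM_one_pos (m t s : ℤ) (h1 : 2 ≤ t) (h2 : t ≤ m) (hs : s = t/2) :
    xiM m 1 t = MvPolynomial.C ((s:ℚ)) * (-va + MvPolynomial.C ((s:ℚ)) * vd) := by
  rw [xiM_eval_pos m 1 t s s (by omega) h2 (by omega) (by omega), B_one s (by omega), Pneg_single]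

lemma xiM_one_neg (m t s : ℤ) (h1 : -m ≤ t) (h2 : t ≤ -1) (hs : s = (-t+1)/2) :
    xiM m 1 t = MvPolynomial.C ((s:ℚ)) * (va + MvPolynomial.C ((s:ℚ)) * vd) := by
  rw [xiM_eval_neg m 1 t s s h1 (by omega) (by omega) (by omega), B_one s (by omega), Ppos_single]

lemma lin_neg (x y : ℚ) :
    MvPolynomial.C x * (-va + MvPolynomial.C x * vd) - MvPolynomial.C y * (va + MvPolynomial.C y * vd)
      = MvPolynomial.C (x+y) * (-va + MvPolynomial.C (x-y) * vd) := by
  simp only [map_add, map_sub]; ring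

lemma lin_pos (x y : ℚ) :
    MvPolynomial.C x * (va + MvPolynomial.C x * vd) - MvPolynomial.C y * (va + MvPolynomial.C y * vd)
      = MvPolynomial.C (x-y) * (va + MvPolynomial.C (x+y) * vd) := by
  simp only [map_add, map_sub]; ring

lemma key3A (a : ℤ) (q : ℕ) (ha : 1 ≤ a) :
    B (a + q - 1) q * (((a + (q:ℤ)):ℤ):ℚ) = ((q+1:ℕ):ℚ) * B (a + q) (q+1) := by
  unfold B
  have h1 : (a + (q:ℤ)).toNat = (a + (q:ℤ) - 1).toNat + 1 := by omega
  set n := (a + (q:ℤ) - 1).toNat with hn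
  rw [h1]
  have h2 : (((a + (q:ℤ)):ℤ):ℚ) = ((n:ℕ):ℚ) + 1 := by
    have : a + (q:ℤ) = (n:ℤ) + 1 := by omega
    exact_mod_cast this
  rw [h2]
  have h3 := Nat.add_one_mul_choose_eq n q
  have h4 : ((n+1 : ℕ):ℚ) * (n.choose q) = ((n+1).choose (q+1) : ℚ) * (q+1) := by
    exact_mod_cast congrArg (Nat.cast : ℕ → ℚ) h3
  push_cast at h4 ⊢
  linarith

lemma key3B (a : ℤ) (q : ℕ) (ha : 2 ≤ a) :
    B (a + q - 1) q * (((a - 1):ℤ):ℚ) = ((q+1:ℕ):ℚ) * B (a + q - 1) (q+1) := by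
  unfold B
  set n := (a + (q:ℤ) - 1).toNat with hn
  have hqn : q ≤ n := by omega
  have h2 : (((a - 1):ℤ):ℚ) = ((n - q : ℕ):ℚ) := by
    have : a - 1 = ((n - q : ℕ) : ℤ) := by omega
    exact_mod_cast this
  rw [h2]
  have h3 := Nat.choose_succ_right_eq n q
  have h4 : (n.choose (q+1) : ℚ) * (q+1) = (n.choose q : ℚ) * ((n - q : ℕ):ℚ) := by
    exact_mod_cast congrArg (Nat.cast : ℕ → ℚ) h3
  push_cast [Nat.cast_sub hqn] at h4 ⊢
  linarith

/-- for odd `0 < q < m`,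
`ξ⁻_q · (ξ⁻_1 − ξ⁻_1(−q)) = (q+1) · ξ⁺_{q+1}` pointwise on `V_m`. -/
theorem statement4 (m : ℕ) (hm : 1 ≤ m) (q : ℕ) (hodd : Odd q)
    (hq0 : 0 < q) (hqm : q < m)
    (t : ℤ) (ht1 : -(m : ℤ) ≤ t) (ht2 : t ≤ (m : ℤ)) :
    xiM m q t * (xiM m 1 t - xiM m 1 (-(q : ℤ))) = ((q + 1 : ℕ) : Rpoly) * xiP m (q + 1) t := by
  obtain ⟨r, hr⟩ := hodd
  have hN : ((q+1:ℕ) : Rpoly) = MvPolynomial.C (((q+1:ℕ)):ℚ) := (map_natCast MvPolynomial.C (q+1)).symm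
  rcases le_or_gt ((q:ℤ)+1) t with hA | hA
  · -- case A : q+1 ≤ t ≤ m
    set a : ℤ := (t - (q:ℤ) + 1) / 2 with ha
    have ha1 : 1 ≤ a := by omega
    rw [xiM_eval_pos m q t a (a+q-1) hA ht2 (by omega) rfl,
        xiM_one_pos m t (a+r) (by omega) ht2 (by omega),
        xiM_one_neg m (-(q:ℤ)) (r+1) (by omega) (by omega) (by omega),
        xiP_eval_pos m (q+1) t a (a+q-1) (a-1) (a+(q:ℤ)) (by push_cast; omega) ht2
          (by push_cast; omega) (by omega) (by push_cast; omega) (by push_cast; omega),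
        lin_neg]
    rw [show (((a+r:ℤ)):ℚ) + (((r+1:ℤ)):ℚ) = (((a + (q:ℤ)):ℤ):ℚ) by push_cast [hr]; ring,
        show (((a+r:ℤ)):ℚ) - (((r+1:ℤ)):ℚ) = (((a - 1:ℤ)):ℚ) by push_cast [hr]; ring]
    have key2 := Pneg_cons a (a + q - 1) (a-1) (by omega) rfl
    have key3' : MvPolynomial.C (B (a + (q:ℤ) - 1) q) * MvPolynomial.C ((((a + (q:ℤ)):ℤ)):ℚ)
        = ((q+1:ℕ) : Rpoly) * MvPolynomial.C (B (a + (q:ℤ)) (q+1)) := by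
      rw [hN, ← map_mul, ← map_mul]
      exact congrArg _ (key3A a q ha1)
    linear_combination (MvPolynomial.C (B (a + (q:ℤ) - 1) q) * MvPolynomial.C ((((a + (q:ℤ)):ℤ)):ℚ)) * key2
      + Pneg (a-1) (a + (q:ℤ) - 1) * key3'
  rcases le_or_gt t (-(q:ℤ)-2) with hB | hB
  · -- case B : -m ≤ t ≤ -(q+2)
    set a : ℤ := (-t - (q:ℤ) + 2) / 2 with ha
    have ha1 : 2 ≤ a := by omega
    rw [xiM_eval_neg m q t a (a+q-1) ht1 (by omega) (by omega) rfl,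
        xiM_one_neg m t (a+r) ht1 (by omega) (by omega),
        xiM_one_neg m (-(q:ℤ)) (r+1) (by omega) (by omega) (by omega),
        xiP_eval_neg m (q+1) t (a-1) (a+(q:ℤ)) a (a+(q:ℤ)-1) ht1 (by push_cast; omega)
          (by push_cast; omega) (by omega) (by push_cast; omega) (by push_cast; omega),
        lin_pos]
    rw [show (((a+r:ℤ)):ℚ) - (((r+1:ℤ)):ℚ) = (((a - 1:ℤ)):ℚ) by push_cast [hr]; ring,
        show (((a+r:ℤ)):ℚ) + (((r+1:ℤ)):ℚ) = (((a + (q:ℤ)):ℤ):ℚ) by push_cast [hr]; ring]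
    have key2 := Ppos_snoc a (a + q - 1) (a + (q:ℤ)) (by omega) (by omega)
    have key3' : MvPolynomial.C (B (a + (q:ℤ) - 1) q) * MvPolynomial.C ((((a - 1:ℤ)):ℚ))
        = ((q+1:ℕ) : Rpoly) * MvPolynomial.C (B (a + (q:ℤ) - 1) (q+1)) := by
      rw [hN, ← map_mul, ← map_mul]
      exact congrArg _ (key3B a q ha1)
    linear_combination (MvPolynomial.C (B (a + (q:ℤ) - 1) q) * MvPolynomial.C ((((a - 1:ℤ)):ℚ))) * key2
      + Ppos a (a + (q:ℤ)) * key3'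
  -- middle cases : -(q+1) ≤ t ≤ q
  by_cases hC : t = -(q:ℤ) ∨ t = -(q:ℤ)-1
  · have he : xiM m 1 t = xiM m 1 (-(q:ℤ)) := by
      rcases hC with h | h
      · subst h; rfl
      · subst h
        rw [xiM_one_neg m _ (r+1) (by omega) (by omega) (by omega),
            xiM_one_neg m (-(q:ℤ)) (r+1) (by omega) (by omega) (by omega)]
    rw [he, sub_self, mul_zero,
        xiP_zero m (q+1) t (by push_cast; omega) (by push_cast; omega), mul_zero]
  · push_neg at hC
    rw [xiM_zero m q t (by omega) (by omega),
        xiP_zero m (q+1) t (by push_cast; omega) (by push_cast; omega), zero_mul, mul_zero]
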